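/- The path P_n on n vertices has edge irregularity strength es(P_n) = ⌈n/2⌉ for n ≥ 2. -/

import Mathlib

/-- A vertex `k`-labeling `φ : V → {1,…,k}` of `G` is *edge irregular* if the
weights `φ x + φ y` of distinct edges are distinct. -/
def IsEdgeIrregular {V : Type*} (G : SimpleGraph V) (k : ℕ) (φ : V → ℕ) : Prop :=
  (∀ v, 1 ≤ φ v ∧ φ v ≤ k) ∧
  ∀ u v x y, G.Adj u v → G.Adj x y → s(u, v) ≠ s(x, y) → φ u + φ v ≠ φ x + φ y

/-- The edge irregularity strength `es G`. -/
noncomputable def es {V : Type*} (G : SimpleGraph V) : ℕ :=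
  sInf {k | ∃ φ : V → ℕ, IsEdgeIrregular G k φ}

/-- The Dandelion graph `D(n,l)` on `Fin n`: path vertices `p_j` are `0,…,l-1`,
leaves `x_1,…,x_{n-l}` are `l,…,n-1`, each leaf adjacent to the center `0`. -/
def Dandelion (n l : ℕ) : SimpleGraph (Fin n) :=
  SimpleGraph.fromRel (fun a b =>
    (a.val = 0 ∧ l ≤ b.val) ∨ (a.val + 1 = b.val ∧ b.val ≤ l - 1))

instance (n l : ℕ) : DecidableRel (Dandelion n l).Adj := fun a b =>
  decidable_of_iff _ (SimpleGraph.fromRel_adj _ a b).symm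

/-- The path `P_n` on `n` vertices has edge irregularity strength `⌈n/2⌉` for `n ≥ 2`. -/
theorem stmt_2 (n : ℕ) (hn : 2 ≤ n) :
    es (SimpleGraph.pathGraph n) = (n + 1) / 2 := by
  have hnpos : 0 < n := by omega
  have hmem : ((n+1)/2) ∈ {k | ∃ φ : Fin n → ℕ,
      IsEdgeIrregular (SimpleGraph.pathGraph n) k φ} := by
    refine ⟨fun v => v.val / 2 + 1, fun v => ?_, ?_⟩
    · have := v.isLt
      exact ⟨by show 1 ≤ v.val / 2 + 1; omega, by show v.val / 2 + 1 ≤ (n+1)/2; omega⟩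
    · intro u v x y huv hxy hne
      rw [SimpleGraph.pathGraph_adj] at huv hxy
      have hne' : ¬((u = x ∧ v = y) ∨ (u = y ∧ v = x)) := by
        rw [← Sym2.eq_iff]; exact hne
      simp only [Fin.ext_iff, not_or, not_and_or] at hne'
      show u.val / 2 + 1 + (v.val / 2 + 1) ≠ x.val / 2 + 1 + (y.val / 2 + 1)
      omega
  refine le_antisymm (Nat.sInf_le hmem) (le_csInf ⟨_, hmem⟩ ?_)
  rintro k ⟨φ, hbound, hinj⟩
  have hk1 : 1 ≤ k := le_trans (hbound ⟨0, hnpos⟩).1 (hbound ⟨0, hnpos⟩).2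
  set f : ℕ → ℕ := fun i =>
    φ ⟨i % n, Nat.mod_lt _ hnpos⟩ + φ ⟨(i+1) % n, Nat.mod_lt _ hnpos⟩ with hf
  have hcard : (Finset.range (n-1)).card ≤ (Finset.Icc 2 (2*k)).card := by
    apply Finset.card_le_card_of_injOn f
    · intro i hi
      have h1 := hbound ⟨i % n, Nat.mod_lt _ hnpos⟩
      have h2 := hbound ⟨(i+1) % n, Nat.mod_lt _ hnpos⟩
      simp only [hf, Finset.mem_coe, Finset.mem_Icc]
      omega
    · intro i hi j hj hfeq
      by_contra hne
      simp only [Finset.mem_coe, Finset.mem_range] at hi hj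
      have hi1 : i % n = i := Nat.mod_eq_of_lt (by omega)
      have hi2 : (i+1) % n = i + 1 := Nat.mod_eq_of_lt (by omega)
      have hj1 : j % n = j := Nat.mod_eq_of_lt (by omega)
      have hj2 : (j+1) % n = j + 1 := Nat.mod_eq_of_lt (by omega)
      have adj1 : (SimpleGraph.pathGraph n).Adj ⟨i % n, Nat.mod_lt _ hnpos⟩
          ⟨(i+1) % n, Nat.mod_lt _ hnpos⟩ := by
        rw [SimpleGraph.pathGraph_adj]; left; simp only; omega
      have adj2 : (SimpleGraph.pathGraph n).Adj ⟨j % n, Nat.mod_lt _ hnpos⟩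
          ⟨(j+1) % n, Nat.mod_lt _ hnpos⟩ := by
        rw [SimpleGraph.pathGraph_adj]; left; simp only; omega
      have hsym : (s(⟨i % n, Nat.mod_lt _ hnpos⟩, ⟨(i+1) % n, Nat.mod_lt _ hnpos⟩) :
          Sym2 (Fin n)) ≠ s(⟨j % n, Nat.mod_lt _ hnpos⟩, ⟨(j+1) % n, Nat.mod_lt _ hnpos⟩) := by
        intro h
        rw [Sym2.eq_iff] at h
        simp only [Fin.mk.injEq] at h
        omega
      exact hinj _ _ _ _ adj1 adj2 hsym hfeq
  rw [Finset.card_range, Nat.card_Icc] at hcard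
  omega
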